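/- Let (B, |·|, d) be an ultrametric Banach algebra with continuous derivation, t ∈ B with d(t) = 1, (n−1)! invertible in B, and (M, ∇) a differential module of rank n with basis e and connection matrix G_1. If |G_1| < min(1, 1/|t|, |2|/|t^2|, ..., |(n−1)!|/|t^{n−1}|)^2 · min(1, 1/|d|^{2n−3}) in the sup-norm on M_n(B), then the Katz vector c_0(e, t) = Σ_{j=0}^{n-1} (t^j/j!) Σ_{k=0}^{j} (−1)^k C(j,k) ∇^k(e_{j−k}) is a cyclic vector for M. -/

import Mathlib

set_option linter.unusedSectionVars false

namespace Stmt17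

variable {B : Type} [NormedCommRing B] [NormOneClass B]

lemma usum {ι : Type*} (h : ∀ x y : B, ‖x + y‖ ≤ max ‖x‖ ‖y‖) (s : Finset ι) (f : ι → B)
    {C : ℝ} (hC : 0 ≤ C) (hf : ∀ i ∈ s, ‖f i‖ ≤ C) : ‖∑ i ∈ s, f i‖ ≤ C := by
  induction s using Finset.cons_induction with
  | empty => simpa using hC
  | cons a s ha ih =>
    rw [Finset.sum_cons]
    exact le_trans (h _ _) (max_le (hf a (by simp)) (ih fun i hi => hf i (by simp [hi])))

lemma natnorm (h : ∀ x y : B, ‖x + y‖ ≤ max ‖x‖ ‖y‖) (k : ℕ) : ‖(k : B)‖ ≤ 1 := by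
  induction k with
  | zero => simp
  | succ m ih =>
    push_cast
    exact le_trans (h _ _) (max_le ih (by simp))

lemma intnorm (h : ∀ x y : B, ‖x + y‖ ≤ max ‖x‖ ‖y‖) (a : ℤ) : ‖(a : B)‖ ≤ 1 := by
  rcases Int.natAbs_eq a with ha | ha <;> rw [ha]
  · rw [Int.cast_natCast]; exact natnorm h a.natAbs
  · rw [Int.cast_neg, Int.cast_natCast, norm_neg]; exact natnorm h a.natAbs

lemma zsmul_le (h : ∀ x y : B, ‖x + y‖ ≤ max ‖x‖ ‖y‖)
    (h_int : ∀ (m : ℤ) (x : B), ‖m • x‖ = ‖(m : B)‖ * ‖x‖) (a : ℤ) (x : B) :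
    ‖a • x‖ ≤ ‖x‖ := by
  rw [h_int]
  exact mul_le_of_le_one_left (norm_nonneg x) (intnorm h a)

lemma prod_le_one {ι : Type*} (s : Finset ι) (f : ι → B)
    (hf : ∀ i ∈ s, ‖f i‖ ≤ 1) : ‖∏ i ∈ s, f i‖ ≤ 1 := by
  induction s using Finset.cons_induction with
  | empty => simp
  | cons a s ha ih =>
    rw [Finset.prod_cons]
    exact le_trans (norm_mul_le _ _)
      (mul_le_one₀ (hf a (by simp)) (norm_nonneg _) (ih fun i hi => hf i (by simp [hi])))

lemma prod_small {ι : Type*} [DecidableEq ι] (s : Finset ι) (f : ι → B) {β : ℝ} (hβ : 0 ≤ β)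
    {i₀ : ι} (hi₀ : i₀ ∈ s) (hsmall : ‖f i₀‖ ≤ β)
    (hf : ∀ i ∈ s, ‖f i‖ ≤ 1) : ‖∏ i ∈ s, f i‖ ≤ β := by
  rw [← Finset.mul_prod_erase s f hi₀]
  calc ‖f i₀ * ∏ i ∈ s.erase i₀, f i‖ ≤ ‖f i₀‖ * ‖∏ i ∈ s.erase i₀, f i‖ := norm_mul_le _ _
    _ ≤ β * 1 := mul_le_mul hsmall (prod_le_one _ _ fun i hi => hf i (Finset.mem_of_mem_erase hi))
        (norm_nonneg _) hβ
    _ = β := mul_one β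


section alg
variable {n : ℕ}

/-- `t^k / k!` -/
noncomputable def qq (t : B) (k : ℕ) : B := t ^ k * Ring.inverse ((k.factorial : B))

/-- coordinate action of the connection -/
def Nop (d : B → B) (G : Fin n → Fin n → B) (v : Fin n → B) : Fin n → B :=
  fun j => d (v j) + ∑ k, v k * G k j

/-- rows of `H₀(t)` -/
noncomputable def wrow (t : B) (i : ℕ) : Fin n → B := fun j => if i ≤ (j : ℕ) then qq t ((j : ℕ) - i) else 0

variable (d : B → B) (hd_add : ∀ x y : B, d (x + y) = d x + d y)
  (hd_mul : ∀ x y : B, d (x * y) = x * d y + d x * y)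

include hd_add in
lemma d_zero : d 0 = 0 := by
  have h := hd_add 0 0
  rw [add_zero] at h
  exact (add_left_cancel (h.symm.trans (add_zero (d 0)).symm))

include hd_mul in
lemma d_one : d 1 = 0 := by
  have h := hd_mul 1 1
  rw [mul_one, one_mul, mul_one] at h
  exact (add_left_cancel (h.symm.trans (add_zero (d 1)).symm))

include hd_add hd_mul in
lemma d_nat (k : ℕ) : d ((k : ℕ) : B) = 0 := by
  induction k with
  | zero => simpa using d_zero d hd_add
  | succ m ih =>
    push_cast
    rw [hd_add, ih, d_one d hd_mul, add_zero]

include hd_add hd_mul in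
lemma d_inv (u : B) (hu : IsUnit u) (hdu : d u = 0) : d (Ring.inverse u) = 0 := by
  have h1 : Ring.inverse u * u = 1 := Ring.inverse_mul_cancel u hu
  have h2 := hd_mul (Ring.inverse u) u
  rw [h1, d_one d hd_mul, hdu, mul_zero, zero_add] at h2
  have h3 : d (Ring.inverse u) * u = 0 := h2.symm
  calc d (Ring.inverse u) = d (Ring.inverse u) * (u * Ring.inverse u) := by
        rw [Ring.mul_inverse_cancel u hu, mul_one]
    _ = d (Ring.inverse u) * u * Ring.inverse u := by ring
    _ = 0 := by rw [h3, zero_mul]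

include hd_mul in
lemma d_pow (t : B) (ht : d t = 1) (k : ℕ) :
    d (t ^ (k + 1)) = (((k + 1 : ℕ)) : B) * t ^ k := by
  induction k with
  | zero => simp [ht]
  | succ m ih =>
    have : t ^ (m + 2) = t * t ^ (m + 1) := by ring
    rw [this, hd_mul, ih, ht]
    push_cast
    ring

lemma fact_unit {m l : ℕ} (h : m ≤ l) (hu : IsUnit ((l.factorial : B))) :
    IsUnit ((m.factorial : B)) := by
  obtain ⟨c, hc⟩ := Nat.factorial_dvd_factorial h
  refine isUnit_of_mul_isUnit_left (y := (c : B)) ?_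
  rw [← Nat.cast_mul, ← hc]; exact hu

lemma succ_mul_inv {k : ℕ} (hu : IsUnit (((k + 1).factorial : B))) :
    (((k + 1 : ℕ)) : B) * Ring.inverse (((k + 1).factorial : B))
      = Ring.inverse ((k.factorial : B)) := by
  have hk : IsUnit ((k.factorial : B)) := fact_unit (Nat.le_succ k) hu
  have hcancel : ∀ x y : B, x * (k.factorial : B) = y * (k.factorial : B) → x = y :=
    fun x y hxy => hk.mul_right_cancel hxy
  apply hcancel
  have hfs : (((k + 1).factorial : ℕ) : B) = (((k + 1 : ℕ)) : B) * (k.factorial : B) := by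
    rw [Nat.factorial_succ]; push_cast; ring
  calc (((k + 1 : ℕ)) : B) * Ring.inverse (((k + 1).factorial : B)) * (k.factorial : B)
      = Ring.inverse (((k + 1).factorial : B)) * ((((k + 1 : ℕ)) : B) * (k.factorial : B)) := by ring
    _ = Ring.inverse (((k + 1).factorial : B)) * (((k + 1).factorial : ℕ) : B) := by rw [hfs]
    _ = 1 := Ring.inverse_mul_cancel _ hu
    _ = Ring.inverse ((k.factorial : B)) * (k.factorial : B) := (Ring.inverse_mul_cancel _ hk).symm

lemma inv_fact_mul_inv_fact {a b : ℕ} (hu : IsUnit (((a + b).factorial : B))) :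
    Ring.inverse ((a.factorial : B)) * Ring.inverse ((b.factorial : B))
      = (((a + b).choose a : ℕ) : B) * Ring.inverse (((a + b).factorial : B)) := by
  have ha : IsUnit ((a.factorial : B)) := fact_unit (Nat.le_add_right a b) hu
  have hb : IsUnit ((b.factorial : B)) := fact_unit (Nat.le_add_left b a) hu
  have hcancel : ∀ x y : B, x * ((a + b).factorial : B) = y * ((a + b).factorial : B) → x = y :=
    fun x y hxy => hu.mul_right_cancel hxy
  apply hcancel
  have key : (((a + b).factorial : ℕ) : B)
      = (((a + b).choose a : ℕ) : B) * (a.factorial : B) * (b.factorial : B) := by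
    rw [← Nat.choose_mul_factorial_mul_factorial (Nat.le_add_right a b)]
    push_cast
    simp [Nat.add_sub_cancel_left]
  calc Ring.inverse ((a.factorial : B)) * Ring.inverse ((b.factorial : B)) * ((a + b).factorial : B)
      = (((a + b).choose a : ℕ) : B) * (Ring.inverse ((a.factorial : B)) * (a.factorial : B))
          * (Ring.inverse ((b.factorial : B)) * (b.factorial : B)) := by rw [key]; ring
    _ = (((a + b).choose a : ℕ) : B) := by
        rw [Ring.inverse_mul_cancel _ ha, Ring.inverse_mul_cancel _ hb, mul_one, mul_one]
    _ = (((a + b).choose a : ℕ) : B) * Ring.inverse (((a + b).factorial : B)) * ((a + b).factorial : B) := by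
        rw [mul_assoc, Ring.inverse_mul_cancel _ hu, mul_one]

lemma qq_mul (t : B) {a b : ℕ} (hu : IsUnit (((a + b).factorial : B))) :
    qq t a * qq t b = (((a + b).choose a : ℕ) : B) * qq t (a + b) := by
  unfold qq
  rw [show t ^ a * Ring.inverse ((a.factorial : B)) * (t ^ b * Ring.inverse ((b.factorial : B)))
      = t ^ (a + b) * (Ring.inverse ((a.factorial : B)) * Ring.inverse ((b.factorial : B))) by
    rw [pow_add]; ring]
  rw [inv_fact_mul_inv_fact hu]
  ring

lemma qq_zero (t : B) : qq t 0 = 1 := by simp [qq]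

include hd_add hd_mul in
lemma d_qq (t : B) (ht : d t = 1) {k : ℕ} (hu : IsUnit (((k + 1).factorial : B))) :
    d (qq t (k + 1)) = qq t k := by
  unfold qq
  rw [hd_mul, d_inv d hd_add hd_mul _ hu (d_nat d hd_add hd_mul _), mul_zero, zero_add,
    d_pow d hd_mul t ht k]
  rw [show ((((k+1:ℕ)):B) * t ^ k) * Ring.inverse (((k+1).factorial : B))
      = t ^ k * ((((k+1:ℕ)):B) * Ring.inverse (((k+1).factorial : B))) by ring,
    succ_mul_inv hu]


/-- rows of `H₀(-t)` -/
noncomputable def krow (t : B) (i : ℕ) : Fin n → B :=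
  fun j => if i ≤ (j : ℕ) then ((-1 : ℤ) ^ ((j : ℕ) - i)) • qq t ((j : ℕ) - i) else 0

lemma unit_of_le (t : B) {m : ℕ} (hn : 0 < n) (hm : m ≤ n - 1)
    (hu : IsUnit (((n - 1).factorial : B))) : IsUnit ((m.factorial : B)) :=
  fact_unit hm hu

lemma KW (hn : 0 < n) (t : B) (hu : IsUnit (((n - 1).factorial : B))) (i j : Fin n) :
    ∑ k : Fin n, krow t (i : ℕ) k * wrow t (k : ℕ) j = if i = j then 1 else 0 := by
  have hFn : ∑ k : Fin n, krow t (i : ℕ) k * wrow t (k : ℕ) j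
      = ∑ k ∈ Finset.range n,
        ((if (i : ℕ) ≤ k then ((-1 : ℤ) ^ (k - (i : ℕ))) • qq t (k - (i : ℕ)) else 0) *
          (if k ≤ (j : ℕ) then qq t ((j : ℕ) - k) else 0)) := by
    rw [← Fin.sum_univ_eq_sum_range]
    rfl
  rw [hFn]
  by_cases hij : (i : ℕ) ≤ (j : ℕ)
  · have hsub : Finset.Ico (i : ℕ) ((j : ℕ) + 1) ⊆ Finset.range n := by
      intro k hk
      rw [Finset.mem_Ico] at hk
      rw [Finset.mem_range]
      have := j.isLt
      omega
    rw [← Finset.sum_subset hsub ?van]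
    case van =>
      intro k _ hk
      rw [Finset.mem_Ico] at hk
      by_cases h1 : (i : ℕ) ≤ k
      · rw [if_neg (show ¬ (k ≤ (j : ℕ)) by omega), mul_zero]
      · rw [if_neg h1, zero_mul]
    rw [Finset.sum_Ico_eq_sum_range]
    have hD : (j : ℕ) + 1 - (i : ℕ) = ((j : ℕ) - (i : ℕ)) + 1 := by omega
    rw [hD]
    set D := (j : ℕ) - (i : ℕ) with hDdef
    have hterm : ∀ a ∈ Finset.range (D + 1),
        ((if (i : ℕ) ≤ (i : ℕ) + a then ((-1 : ℤ) ^ ((i : ℕ) + a - (i : ℕ))) •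
            qq t ((i : ℕ) + a - (i : ℕ)) else 0) *
          (if (i : ℕ) + a ≤ (j : ℕ) then qq t ((j : ℕ) - ((i : ℕ) + a)) else 0))
        = ((-1 : ℤ) ^ a * ((D.choose a : ℕ) : ℤ)) • qq t D := by
      intro a ha
      rw [Finset.mem_range] at ha
      have haD : a ≤ D := by omega
      rw [if_pos (Nat.le_add_right _ _), if_pos (by omega), Nat.add_sub_cancel_left]
      have hDa : (j : ℕ) - ((i : ℕ) + a) = D - a := by omega
      rw [hDa, smul_mul_assoc]
      have huD : IsUnit (((a + (D - a)).factorial : B)) := by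
        apply fact_unit (l := n - 1) _ hu
        have := j.isLt
        omega
      rw [qq_mul t huD]
      have hada : a + (D - a) = D := by omega
      rw [hada] at *
      rw [mul_smul]
      congr 1
      rw [zsmul_eq_mul]
      push_cast
      ring
    rw [Finset.sum_congr rfl hterm, ← Finset.sum_smul]
    rw [Int.alternating_sum_range_choose]
    by_cases hD0 : D = 0
    · have hij' : i = j := by
        have := Fin.val_eq_val i j
        apply Fin.ext
        omega
      rw [if_pos hD0, if_pos hij', hD0, one_smul, qq_zero]
    · have hij' : ¬ i = j := by
        intro hcon
        apply hD0
        rw [hcon] at hDdef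
        omega
      rw [if_neg hD0, if_neg hij', zero_smul]
  · have hij' : ¬ i = j := fun hcon => hij (by rw [hcon])
    rw [if_neg hij']
    apply Finset.sum_eq_zero
    intro k _
    by_cases h1 : (i : ℕ) ≤ k
    · rw [if_neg (show ¬ (k ≤ (j : ℕ)) by omega), mul_zero]
    · rw [if_neg h1, zero_mul]

include hd_add in
lemma d_sub (x y : B) : d (x - y) = d x - d y := by
  have h := hd_add (x - y) y
  rw [sub_add_cancel] at h
  rw [h]
  ring

include hd_add hd_mul in
lemma d_wrow (hn : 0 < n) (t : B) (ht : d t = 1) (hu : IsUnit (((n - 1).factorial : B)))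
    (i : ℕ) (j : Fin n) : d (wrow t i j) = wrow t (i + 1) j := by
  unfold wrow
  by_cases h1 : i + 1 ≤ (j : ℕ)
  · have h0 : i ≤ (j : ℕ) := by omega
    rw [if_pos h0, if_pos h1]
    have hsp : (j : ℕ) - i = ((j : ℕ) - (i + 1)) + 1 := by omega
    rw [hsp]
    apply d_qq d hd_add hd_mul t ht
    apply fact_unit (l := n - 1) _ hu
    have := j.isLt
    omega
  · rw [if_neg h1]
    by_cases h0 : i ≤ (j : ℕ)
    · have hsp : (j : ℕ) - i = 0 := by omega
      rw [if_pos h0, hsp, qq_zero]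
      exact d_one d hd_mul
    · rw [if_neg h0]
      exact d_zero d hd_add

def unitv (i : Fin n) : Fin n → B := fun k => if k = i then 1 else 0

include hd_add hd_mul in
lemma Nop_unitv (G : Fin n → Fin n → B) (i : Fin n) :
    Nop d G (unitv i) = fun k => G i k := by
  funext k
  unfold Nop unitv
  rw [show (d (if k = i then (1:B) else 0)) = 0 by
    by_cases h : k = i
    · rw [if_pos h]; exact d_one d hd_mul
    · rw [if_neg h]; exact d_zero d hd_add]
  rw [zero_add]
  rw [Finset.sum_eq_single i (fun b _ hb => by rw [if_neg hb, zero_mul])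
    (fun h => absurd (Finset.mem_univ i) h)]
  rw [if_pos rfl, one_mul]


variable (h_ultra : ∀ x y : B, ‖x + y‖ ≤ max ‖x‖ ‖y‖)
  (δ : ℝ) (hd_norm : ∀ x : B, ‖d x‖ ≤ δ * ‖x‖)
  (G : Fin n → Fin n → B) (g : ℝ) (hg : ∀ i j, ‖G i j‖ ≤ g)
  (m' : ℝ) (hm1 : 1 ≤ m') (hgm : g ≤ m') (hδm : δ ≤ m')

include h_ultra hd_norm hg hm1 hgm hδm hd_add hd_mul in
lemma Nop_unit_bound (hg0 : 0 ≤ g) (s : ℕ) (i : Fin n) :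
    ∀ k, ‖((Nop d G)^[s + 1] (unitv i)) k‖ ≤ g * m' ^ s := by
  induction s with
  | zero =>
    intro k
    rw [Function.iterate_one, Nop_unitv d hd_add hd_mul G i]
    simpa using hg i k
  | succ s ih =>
    intro k
    rw [Function.iterate_succ_apply']
    unfold Nop
    refine le_trans (h_ultra _ _) (max_le ?_ ?_)
    · refine le_trans (hd_norm _) ?_
      calc δ * ‖((Nop d G)^[s + 1] (unitv i)) k‖ ≤ m' * (g * m' ^ s) := by
            apply mul_le_mul hδm (ih k) (norm_nonneg _) (le_trans zero_le_one hm1)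
        _ = g * m' ^ (s + 1) := by ring
    · refine usum h_ultra _ _ (by positivity) ?_
      intro l _
      refine le_trans (norm_mul_le _ _) ?_
      calc ‖((Nop d G)^[s + 1] (unitv i)) l‖ * ‖G l k‖ ≤ (g * m' ^ s) * m' := by
            apply mul_le_mul (ih l) (le_trans (hg l k) hgm) (norm_nonneg _) (by positivity)
        _ = g * m' ^ (s + 1) := by ring

include h_ultra hd_norm hg hm1 hgm hδm hd_add hd_mul in
lemma Ebound (hn : 0 < n) (t : B) (ht : d t = 1) (hu : IsUnit (((n - 1).factorial : B)))
    (hg0 : 0 ≤ g) (hg1 : g ≤ 1)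
    (T : ℝ) (hT1 : 1 ≤ T) (hwT : ∀ (i : ℕ) (j : Fin n), ‖wrow t i j‖ ≤ T)
    (v0 : Fin n → B) (hv0 : ∀ j, ‖v0 j - wrow t 0 j‖ ≤ T * g * m' ^ (n - 2)) :
    ∀ (i : ℕ) (j : Fin n),
      ‖((Nop d G)^[i] v0) j - wrow t i j‖ ≤ T * g * m' ^ (n - 2 + i) := by
  have hT0 : (0:ℝ) ≤ T := le_trans zero_le_one hT1
  have hm0 : (0:ℝ) ≤ m' := le_trans zero_le_one hm1
  intro i
  induction i with
  | zero => simpa using hv0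
  | succ i ih =>
    intro j
    rw [Function.iterate_succ_apply']
    simp only [Nop]
    have hkey : d (((Nop d G)^[i] v0) j) + ∑ k, ((Nop d G)^[i] v0) k * G k j
        - wrow t (i + 1) j
        = d (((Nop d G)^[i] v0) j - wrow t i j)
          + ∑ k, ((Nop d G)^[i] v0) k * G k j := by
      rw [d_sub d hd_add, d_wrow d hd_add hd_mul hn t ht hu]
      ring
    rw [hkey]
    refine le_trans (h_ultra _ _) (max_le ?_ ?_)
    · refine le_trans (hd_norm _) ?_
      calc δ * ‖((Nop d G)^[i] v0) j - wrow t i j‖ ≤ m' * (T * g * m' ^ (n - 2 + i)) := by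
            apply mul_le_mul hδm (ih j) (norm_nonneg _) hm0
        _ = T * g * m' ^ (n - 2 + (i + 1)) := by rw [← Nat.add_assoc]; ring
    · refine usum h_ultra _ _ (by positivity) ?_
      intro k _
      refine le_trans (norm_mul_le _ _) ?_
      have hvk : ‖((Nop d G)^[i] v0) k‖ ≤ T * m' ^ (n - 2 + i) := by
        have h1 : ((Nop d G)^[i] v0) k
            = (((Nop d G)^[i] v0) k - wrow t i k) + wrow t i k := by ring
        rw [h1]
        refine le_trans (h_ultra _ _) (max_le ?_ ?_)
        · refine le_trans (ih k) ?_
          calc T * g * m' ^ (n - 2 + i) ≤ T * 1 * m' ^ (n - 2 + i) := by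
                apply mul_le_mul_of_nonneg_right (by nlinarith) (by positivity)
            _ = T * m' ^ (n - 2 + i) := by ring
        · refine le_trans (hwT i k) ?_
          nlinarith [one_le_pow₀ hm1 (n := n - 2 + i)]
      calc ‖((Nop d G)^[i] v0) k‖ * ‖G k j‖ ≤ (T * m' ^ (n - 2 + i)) * g := by
            apply mul_le_mul hvk (hg k j) (norm_nonneg _) (by positivity)
        _ = T * g * m' ^ (n - 2 + i) := by ring
        _ ≤ T * g * m' ^ (n - 2 + (i + 1)) := by
            apply mul_le_mul_of_nonneg_left _ (by positivity)
            rw [← Nat.add_assoc, pow_succ]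
            nlinarith [pow_nonneg hm0 (n - 2 + i), one_le_pow₀ hm1 (n := n - 2 + i)]

end alg

section det
variable {n : ℕ} (h_ultra : ∀ x y : B, ‖x + y‖ ≤ max ‖x‖ ‖y‖)
  (h_int : ∀ (m : ℤ) (x : B), ‖m • x‖ = ‖(m : B)‖ * ‖x‖)

include h_ultra in
lemma prod_one_add {ι : Type*} (s : Finset ι) (f : ι → B) {β : ℝ} (hβ0 : 0 ≤ β) (hβ1 : β ≤ 1)
    (hf : ∀ i ∈ s, ‖f i‖ ≤ β) : ‖(∏ i ∈ s, (1 + f i)) - 1‖ ≤ β := by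
  induction s using Finset.cons_induction with
  | empty => simpa using hβ0
  | cons a s ha ih =>
    rw [Finset.prod_cons]
    have key : (1 + f a) * ∏ i ∈ s, (1 + f i) - 1
        = ((∏ i ∈ s, (1 + f i)) - 1) * (1 + f a) + f a := by ring
    rw [key]
    refine le_trans (h_ultra _ _) (max_le ?_ (hf a (by simp)))
    refine le_trans (norm_mul_le _ _) ?_
    have h1 : ‖(1:B) + f a‖ ≤ 1 := by
      refine le_trans (h_ultra _ _) (max_le (by simp) (le_trans (hf a (by simp)) hβ1))
    calc ‖(∏ i ∈ s, (1 + f i)) - 1‖ * ‖(1:B) + f a‖ ≤ β * 1 :=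
          mul_le_mul (ih fun i hi => hf i (by simp [hi])) h1 (norm_nonneg _) hβ0
      _ = β := mul_one β

include h_ultra h_int in
lemma det_one_add {β : ℝ} (hβ0 : 0 ≤ β) (hβ1 : β ≤ 1)
    (X : Matrix (Fin n) (Fin n) B) (hX : ∀ i j, ‖X i j‖ ≤ β) :
    ‖(1 + X).det - 1‖ ≤ β := by
  rw [Matrix.det_apply]
  rw [← Finset.add_sum_erase _ _ (Finset.mem_univ (1 : Equiv.Perm (Fin n)))]
  have hid : (Equiv.Perm.sign (1 : Equiv.Perm (Fin n))) • ∏ i : Fin n, (1 + X) ((1 : Equiv.Perm (Fin n)) i) i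
      = ∏ i : Fin n, (1 + (X i i)) := by
    rw [Equiv.Perm.sign_one, one_smul]
    apply Finset.prod_congr rfl
    intro i _
    rw [Equiv.Perm.one_apply, Matrix.add_apply, Matrix.one_apply_eq]
  rw [hid]
  have hsplit : (∏ i : Fin n, (1 + (X i i)))
      + (∑ σ ∈ Finset.univ.erase (1 : Equiv.Perm (Fin n)),
          Equiv.Perm.sign σ • ∏ i : Fin n, (1 + X) (σ i) i) - 1
      = ((∏ i : Fin n, (1 + (X i i))) - 1)
      + (∑ σ ∈ Finset.univ.erase (1 : Equiv.Perm (Fin n)),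
          Equiv.Perm.sign σ • ∏ i : Fin n, (1 + X) (σ i) i) := by ring
  rw [hsplit]
  refine le_trans (h_ultra _ _) (max_le ?_ ?_)
  · exact prod_one_add h_ultra _ _ hβ0 hβ1 fun i _ => hX i i
  · refine usum h_ultra _ _ hβ0 ?_
    intro σ hσ
    have hσ1 : σ ≠ 1 := (Finset.mem_erase.mp hσ).1
    have hex : ∃ i₀ : Fin n, σ i₀ ≠ i₀ := by
      by_contra hcon
      push_neg at hcon
      exact hσ1 (Equiv.ext fun x => by rw [hcon x, Equiv.Perm.one_apply])
    obtain ⟨i₀, hi₀⟩ := hex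
    have hsmul : ‖Equiv.Perm.sign σ • ∏ i : Fin n, (1 + X) (σ i) i‖
        ≤ ‖∏ i : Fin n, (1 + X) (σ i) i‖ := by
      rw [Units.smul_def]
      exact zsmul_le h_ultra h_int _ _
    refine le_trans hsmul ?_
    refine prod_small _ _ hβ0 (Finset.mem_univ i₀) ?_ ?_
    · rw [Matrix.add_apply, Matrix.one_apply_ne hi₀, zero_add]
      exact hX _ _
    · intro i _
      rw [Matrix.add_apply]
      by_cases hdiag : σ i = i
      · rw [hdiag, Matrix.one_apply_eq]
        exact le_trans (h_ultra _ _) (max_le (by simp) (le_trans (hX i i) hβ1))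
      · rw [Matrix.one_apply_ne hdiag, zero_add]
        exact le_trans (hX _ _) hβ1

end det
end Stmt17
/-- Small connections are cyclic (sup-norm version): over a complete ultrametric Banach
algebra `(B, ‖·‖, d)` with `d(t) = 1` and `(n−1)!` invertible, if every entry of the
connection matrix `G₁` (so its sup-norm) is smaller than
`min(1, 1/‖t‖, ‖2‖/‖t²‖, …, ‖(n−1)!‖/‖t^{n−1}‖)² · min(1, 1/|d|^{2n−3})`, then the
Katz vector `c₀(e, t)` is a cyclic vector for `M`. -/
theorem stmt17 (B : Type) [NormedCommRing B] [CompleteSpace B] [NormOneClass B]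
    (h_ultra : ∀ x y : B, ‖x + y‖ ≤ max ‖x‖ ‖y‖)
    (h_int : ∀ (m : ℤ) (x : B), ‖m • x‖ = ‖(m : B)‖ * ‖x‖)
    (d : B → B)
    (hd_add : ∀ x y, d (x + y) = d x + d y)
    (hd_mul : ∀ x y, d (x * y) = x * d y + d x * y)
    (δ : ℝ) (hδ0 : 0 ≤ δ) (hd_norm : ∀ x, ‖d x‖ ≤ δ * ‖x‖)
    (t : B) (ht : d t = 1)
    (n : ℕ) (hn : 0 < n) (hinv : IsUnit ((Nat.factorial (n - 1) : B)))
    (M : Type) [AddCommGroup M] [Module B M] (e : Module.Basis (Fin n) B M)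
    (nab : M → M) (hadd : ∀ x y, nab (x + y) = nab x + nab y)
    (hL : ∀ (b : B) (m : M), nab (b • m) = d b • m + b • nab m)
    (hG : ∀ i j m : Fin n,
      ‖e.repr (nab (e i)) j‖ <
        (‖(Nat.factorial (m : ℕ) : B)‖ / ‖t ^ (m : ℕ)‖) ^ 2 *
          min 1 (1 / δ ^ (2 * n - 3))) :
    ∃ b : Module.Basis (Fin n) B M, ∀ i : Fin n,
      b i = nab^[(i : ℕ)]
        (∑ j : Fin n, (t ^ (j : ℕ) * Ring.inverse ((Nat.factorial (j : ℕ) : B))) •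
          ∑ s ∈ (Finset.range ((j : ℕ) + 1)).attach,
            ((-1 : ℤ) ^ (s : ℕ) * ((j : ℕ).choose s : ℤ)) •
              nab^[(s : ℕ)] (e ⟨(j : ℕ) - (s : ℕ), by
                have hs := Finset.mem_range.mp s.2; have hj := j.isLt; omega⟩)) := by
  classical
  have hnont : Nontrivial B := ⟨⟨1, 0, fun h => by
    have h1 : ‖(1 : B)‖ = 1 := norm_one
    rw [h, norm_zero] at h1
    exact zero_ne_one h1⟩⟩
  haveI : Nonempty (Fin n) := ⟨⟨0, hn⟩⟩
  set G : Fin n → Fin n → B := fun i j => e.repr (nab (e i)) j with hGdef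
  -- basic derivation facts
  have hnab0 : nab (0 : M) = 0 := by
    have h := hL 0 (0 : M)
    rw [zero_smul, Stmt17.d_zero d hd_add, zero_smul, zero_smul, add_zero] at h
    exact h
  have hnabsum : ∀ (s : Finset (Fin n)) (f : Fin n → M),
      nab (∑ k ∈ s, f k) = ∑ k ∈ s, nab (f k) := by
    intro s f
    induction s using Finset.cons_induction with
    | empty => simpa using hnab0
    | cons a s ha ih => rw [Finset.sum_cons, hadd, ih, Finset.sum_cons]
  have hek : ∀ k, nab (e k) = ∑ j, G k j • e j := fun k =>
    (Module.Basis.sum_repr e (nab (e k))).symm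
  have hbridge : ∀ v : Fin n → B,
      nab (∑ k, v k • e k) = ∑ k, (Stmt17.Nop d G v) k • e k := by
    intro v
    rw [hnabsum]
    calc ∑ k, nab (v k • e k)
        = ∑ k, (d (v k) • e k + ∑ j, (v k * G k j) • e j) := by
          apply Finset.sum_congr rfl
          intro k _
          rw [hL, hek k, Finset.smul_sum]
          congr 1
          apply Finset.sum_congr rfl
          intro j _
          rw [smul_smul]
      _ = (∑ k, d (v k) • e k) + ∑ j, (∑ k, v k * G k j) • e j := by
          rw [Finset.sum_add_distrib]
          congr 1
          rw [Finset.sum_comm]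
          apply Finset.sum_congr rfl
          intro j _
          rw [Finset.sum_smul]
      _ = ∑ j, (Stmt17.Nop d G v) j • e j := by
          rw [← Finset.sum_add_distrib]
          apply Finset.sum_congr rfl
          intro j _
          simp only [Stmt17.Nop]
          rw [add_smul]
  have hiter : ∀ (s : ℕ) (v : Fin n → B),
      nab^[s] (∑ k, v k • e k) = ∑ k, ((Stmt17.Nop d G)^[s] v) k • e k := by
    intro s
    induction s with
    | zero => intro v; simp
    | succ s ih =>
      intro v
      rw [Function.iterate_succ_apply', ih v, hbridge]
      rw [show Stmt17.Nop d G ((Stmt17.Nop d G)^[s] v) = (Stmt17.Nop d G)^[s+1] v from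
        (Function.iterate_succ_apply' (Stmt17.Nop d G) s v).symm]
  have hrepr : ∀ (v : Fin n → B) (k : Fin n), e.repr (∑ l, v l • e l) k = v k := by
    intro v k
    rw [map_sum, Finsupp.finset_sum_apply]
    simp [Finsupp.single_apply]
  have hidbasis : ∀ idx : Fin n, e idx = ∑ l, Stmt17.unitv (B := B) idx l • e l := by
    intro idx
    simp [Stmt17.unitv, ite_smul]
  have hreprnab : ∀ (s : ℕ) (idx k : Fin n),
      e.repr (nab^[s] (e idx)) k = ((Stmt17.Nop d G)^[s] (Stmt17.unitv idx)) k := by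
    intro s idx k
    rw [hidbasis idx, hiter, hrepr]
  set c0 : M := (∑ j : Fin n, (t ^ (j : ℕ) * Ring.inverse ((Nat.factorial (j : ℕ) : B))) •
          ∑ s ∈ (Finset.range ((j : ℕ) + 1)).attach,
            ((-1 : ℤ) ^ (s : ℕ) * ((j : ℕ).choose s : ℤ)) •
              nab^[(s : ℕ)] (e ⟨(j : ℕ) - (s : ℕ), by
                have hs := Finset.mem_range.mp s.2; have hj := j.isLt; omega⟩)) with hc0def
  set chat : Fin n → B := fun k => e.repr c0 k with hchatdef
  have hsum_c0 : ∑ k, chat k • e k = c0 := Module.Basis.sum_repr e c0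
  have hchatform : ∀ k : Fin n, chat k
      = ∑ j' : Fin n, Stmt17.qq t (j' : ℕ) *
          ∑ s ∈ (Finset.range ((j' : ℕ) + 1)).attach,
            ((-1 : ℤ) ^ (s : ℕ) * ((j' : ℕ).choose s : ℤ)) •
              ((Stmt17.Nop d G)^[(s : ℕ)] (Stmt17.unitv
                (⟨(j' : ℕ) - (s : ℕ), by
                  have hs := Finset.mem_range.mp s.2; have hj := j'.isLt; omega⟩ : Fin n))) k := by
    intro k
    show (e.repr c0) k = _
    rw [hc0def]
    rw [map_sum, Finsupp.finset_sum_apply]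
    apply Finset.sum_congr rfl
    intro j' _
    rw [map_smul, Finsupp.smul_apply, smul_eq_mul]
    congr 1
    rw [map_sum, Finsupp.finset_sum_apply]
    apply Finset.sum_congr rfl
    intro s _
    rw [map_zsmul, Finsupp.smul_apply]
    congr 1
    exact hreprnab (s : ℕ) _ k
  -- constants
  set μ : ℝ := min 1 (1 / δ ^ (2 * n - 3)) with hμdef
  have hμ1 : μ ≤ 1 := min_le_left _ _
  have hρpos : ∀ m : Fin n,
      0 < (‖(Nat.factorial (m : ℕ) : B)‖ / ‖t ^ (m : ℕ)‖) ^ 2 * μ :=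
    fun m => lt_of_le_of_lt (norm_nonneg _) (hG ⟨0, hn⟩ ⟨0, hn⟩ m)
  have hμpos : 0 < μ := by
    have h := hρpos ⟨0, hn⟩
    have h0 : ((⟨0, hn⟩ : Fin n) : ℕ) = 0 := rfl
    rw [h0] at h
    simpa using h
  have hfactU : ∀ m : Fin n, IsUnit (((m : ℕ).factorial : B)) := by
    intro m
    refine Stmt17.fact_unit ?_ hinv
    have := m.isLt
    omega
  have hfactpos : ∀ m : Fin n, 0 < ‖(((m : ℕ).factorial : ℕ) : B)‖ := by
    intro m
    rw [norm_pos_iff]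
    exact (hfactU m).ne_zero
  have htpos : ∀ m : Fin n, 0 < ‖t ^ (m : ℕ)‖ := by
    intro m
    rcases lt_or_eq_of_le (norm_nonneg (t ^ (m : ℕ))) with h | h
    · exact h
    · exfalso
      have h2 := hρpos m
      rw [← h, div_zero] at h2
      simp at h2
  have hq_norm : ∀ m : Fin n,
      ‖(((m : ℕ).factorial : ℕ) : B)‖ * ‖Stmt17.qq t (m : ℕ)‖ = ‖t ^ (m : ℕ)‖ := by
    intro m
    have h2 := h_int (((m : ℕ).factorial : ℕ) : ℤ) (Stmt17.qq t (m : ℕ))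
    rw [zsmul_eq_mul] at h2
    have hc : (((((m : ℕ).factorial : ℕ) : ℤ)) : B) = (((m : ℕ).factorial : ℕ) : B) := by
      push_cast; rfl
    rw [hc] at h2
    have h3 : ((((m : ℕ).factorial : ℕ)) : B) * Stmt17.qq t (m : ℕ) = t ^ (m : ℕ) := by
      rw [Stmt17.qq, ← mul_assoc, mul_comm ((((m : ℕ).factorial : ℕ)) : B) (t ^ (m : ℕ)),
        mul_assoc, Ring.mul_inverse_cancel _ (hfactU m), mul_one]
    rw [h3] at h2
    exact h2.symm
  have hqpos : ∀ m : Fin n, 0 < ‖Stmt17.qq t (m : ℕ)‖ := by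
    intro m
    have h1 := hq_norm m
    have h2 := htpos m
    nlinarith [hfactpos m, norm_nonneg (Stmt17.qq t (m : ℕ))]
  set T : ℝ := Finset.univ.sup' Finset.univ_nonempty (fun m : Fin n => ‖Stmt17.qq t (m : ℕ)‖)
    with hTdef
  have hqT : ∀ m : Fin n, ‖Stmt17.qq t (m : ℕ)‖ ≤ T := fun m =>
    Finset.le_sup' (fun m : Fin n => ‖Stmt17.qq t (m : ℕ)‖) (Finset.mem_univ m)
  have hqT' : ∀ a : ℕ, a ≤ n - 1 → ‖Stmt17.qq t a‖ ≤ T := by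
    intro a ha
    have : a = ((⟨a, by omega⟩ : Fin n) : ℕ) := rfl
    rw [this]
    exact hqT _
  have hT1 : 1 ≤ T := by
    have h := hqT ⟨0, hn⟩
    have h0 : ((⟨0, hn⟩ : Fin n) : ℕ) = 0 := rfl
    rw [h0, Stmt17.qq_zero, norm_one] at h
    exact h
  have hT0 : 0 < T := lt_of_lt_of_le zero_lt_one hT1
  obtain ⟨m₀, -, hm₀⟩ := Finset.exists_mem_eq_sup' (Finset.univ_nonempty (α := Fin n))
    (fun m : Fin n => ‖Stmt17.qq t (m : ℕ)‖)
  set g : ℝ := Finset.univ.sup' Finset.univ_nonempty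
    (fun p : Fin n × Fin n => ‖G p.1 p.2‖) with hgdef
  have hgle : ∀ i j, ‖G i j‖ ≤ g := fun i j =>
    Finset.le_sup' (f := fun p : Fin n × Fin n => ‖G p.1 p.2‖) (Finset.mem_univ (i, j))
  have hg0 : 0 ≤ g := le_trans (norm_nonneg _) (hgle ⟨0, hn⟩ ⟨0, hn⟩)
  have hglt : ∀ m : Fin n, g < (‖(Nat.factorial (m : ℕ) : B)‖ / ‖t ^ (m : ℕ)‖) ^ 2 * μ := by
    intro m
    obtain ⟨p, -, hp⟩ := Finset.exists_mem_eq_sup' (Finset.univ_nonempty (α := Fin n × Fin n))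
      (fun p : Fin n × Fin n => ‖G p.1 p.2‖)
    rw [hgdef, hp]
    exact hG p.1 p.2 m
  have hg1 : g < 1 := by
    have h := hglt ⟨0, hn⟩
    have h0 : ((⟨0, hn⟩ : Fin n) : ℕ) = 0 := rfl
    rw [h0] at h
    simp only [Nat.factorial_zero, Nat.cast_one, norm_one, pow_zero, norm_one, div_one,
      one_pow, one_mul] at h
    exact lt_of_lt_of_le h hμ1
  have hgμ : g * T ^ 2 < μ := by
    have h := hglt m₀
    have hfrac : ‖(Nat.factorial (m₀ : ℕ) : B)‖ / ‖t ^ (m₀ : ℕ)‖ = 1 / T := by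
      rw [← hq_norm m₀, show T = ‖Stmt17.qq t (m₀ : ℕ)‖ from hTdef.trans hm₀,
        div_mul_eq_div_div, div_self (hfactpos m₀).ne', one_div]
    rw [hfrac] at h
    have h2 : (1 / T) ^ 2 * μ = μ / T ^ 2 := by
      field_simp
    rw [h2, lt_div_iff₀ (by positivity)] at h
    exact h
  set m' : ℝ := max 1 (max g δ) with hm'def
  have hm1 : 1 ≤ m' := le_max_left _ _
  have hgm : g ≤ m' := le_trans (le_max_left _ _) (le_max_right _ _)
  have hδm : δ ≤ m' := le_trans (le_max_right _ _) (le_max_right _ _)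
  have hμm' : μ * m' ^ (2 * n - 3) ≤ 1 := by
    by_cases hδ1 : δ ≤ 1
    · have hmm : m' = 1 := by
        rw [hm'def]
        rw [max_eq_left]
        exact max_le hg1.le hδ1
      rw [hmm, one_pow, mul_one]
      exact hμ1
    · push_neg at hδ1
      have hmm : m' = δ := by
        have h1 : max g δ = δ := max_eq_right (le_of_lt (lt_trans hg1 hδ1))
        rw [hm'def, h1, max_eq_right (le_of_lt hδ1)]
      have hμδ : μ ≤ 1 / δ ^ (2 * n - 3) := min_le_right _ _
      rw [hmm]
      calc μ * δ ^ (2 * n - 3) ≤ (1 / δ ^ (2 * n - 3)) * δ ^ (2 * n - 3) := by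
            apply mul_le_mul_of_nonneg_right hμδ (by positivity)
        _ = 1 := by
            field_simp
  have hm'0 : (0:ℝ) < m' := lt_of_lt_of_le zero_lt_one hm1
  have hw0 : ∀ k : Fin n, Stmt17.wrow t 0 k = Stmt17.qq t (k : ℕ) := by
    intro k
    simp [Stmt17.wrow]
  have hgpow : (0:ℝ) ≤ T * g * m' ^ (n - 2) := by positivity
  have hE0 : ∀ k : Fin n, ‖chat k - Stmt17.wrow t 0 k‖ ≤ T * g * m' ^ (n - 2) := by
    intro k
    rw [hchatform k, hw0 k]
    have hmem0 : ∀ j' : Fin n, (0 : ℕ) ∈ Finset.range ((j' : ℕ) + 1) := fun j' =>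
      Finset.mem_range.mpr (by omega)
    have key : (∑ j' : Fin n, Stmt17.qq t (j' : ℕ) *
          ∑ s ∈ (Finset.range ((j' : ℕ) + 1)).attach,
            ((-1 : ℤ) ^ (s : ℕ) * ((j' : ℕ).choose s : ℤ)) •
              ((Stmt17.Nop d G)^[(s : ℕ)] (Stmt17.unitv
                (⟨(j' : ℕ) - (s : ℕ), by
                  have hs := Finset.mem_range.mp s.2; have hj := j'.isLt; omega⟩ : Fin n))) k)
          - Stmt17.qq t (k : ℕ)
        = ∑ j' : Fin n, Stmt17.qq t (j' : ℕ) *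
            ∑ s ∈ ((Finset.range ((j' : ℕ) + 1)).attach).erase ⟨0, hmem0 j'⟩,
              ((-1 : ℤ) ^ (s : ℕ) * ((j' : ℕ).choose s : ℤ)) •
                ((Stmt17.Nop d G)^[(s : ℕ)] (Stmt17.unitv
                  (⟨(j' : ℕ) - (s : ℕ), by
                    have hs := Finset.mem_range.mp s.2; have hj := j'.isLt; omega⟩ : Fin n))) k := by
      have h1 : ∀ j' : Fin n,
          (∑ s ∈ (Finset.range ((j' : ℕ) + 1)).attach,
            ((-1 : ℤ) ^ (s : ℕ) * ((j' : ℕ).choose s : ℤ)) •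
              ((Stmt17.Nop d G)^[(s : ℕ)] (Stmt17.unitv
                (⟨(j' : ℕ) - (s : ℕ), by
                  have hs := Finset.mem_range.mp s.2; have hj := j'.isLt; omega⟩ : Fin n))) k)
          = (if k = j' then 1 else 0)
            + ∑ s ∈ ((Finset.range ((j' : ℕ) + 1)).attach).erase ⟨0, hmem0 j'⟩,
              ((-1 : ℤ) ^ (s : ℕ) * ((j' : ℕ).choose s : ℤ)) •
                ((Stmt17.Nop d G)^[(s : ℕ)] (Stmt17.unitv
                  (⟨(j' : ℕ) - (s : ℕ), by
                    have hs := Finset.mem_range.mp s.2; have hj := j'.isLt; omega⟩ : Fin n))) k := by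
        intro j'
        rw [← Finset.add_sum_erase _ _
          (Finset.mem_attach _ (⟨0, hmem0 j'⟩ : {x // x ∈ Finset.range ((j' : ℕ) + 1)}))]
        congr 1
        simp [Stmt17.unitv]
      rw [Finset.sum_congr rfl (fun j' _ => by rw [h1 j', mul_add]), Finset.sum_add_distrib]
      have h2 : (∑ j' : Fin n, Stmt17.qq t (j' : ℕ) * (if k = j' then 1 else 0))
          = Stmt17.qq t (k : ℕ) := by
        simp
      rw [h2]
      ring
    rw [key]
    refine Stmt17.usum h_ultra _ _ hgpow ?_
    intro j' _
    refine le_trans (norm_mul_le _ _) ?_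
    have hR : ‖∑ s ∈ ((Finset.range ((j' : ℕ) + 1)).attach).erase ⟨0, hmem0 j'⟩,
        ((-1 : ℤ) ^ (s : ℕ) * ((j' : ℕ).choose s : ℤ)) •
          ((Stmt17.Nop d G)^[(s : ℕ)] (Stmt17.unitv
            (⟨(j' : ℕ) - (s : ℕ), by
              have hs := Finset.mem_range.mp s.2; have hj := j'.isLt; omega⟩ : Fin n))) k‖
        ≤ g * m' ^ (n - 2) := by
      refine Stmt17.usum h_ultra _ _ (by positivity) ?_
      intro s hs
      have hs0 : (s : ℕ) ≠ 0 := by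
        intro hcon
        exact (Finset.mem_erase.mp hs).1 (Subtype.ext hcon)
      obtain ⟨s', hs'⟩ := Nat.exists_eq_succ_of_ne_zero hs0
      refine le_trans (Stmt17.zsmul_le h_ultra h_int _ _) ?_
      have hs'le : s' ≤ n - 2 := by
        have hsmem := Finset.mem_range.mp s.2
        have := j'.isLt
        omega
      have hgen : ∀ idx : Fin n,
          ‖((Stmt17.Nop d G)^[(s : ℕ)] (Stmt17.unitv idx)) k‖ ≤ g * m' ^ (n - 2) := by
        intro idx
        rw [hs']
        refine le_trans
          (Stmt17.Nop_unit_bound d hd_add hd_mul h_ultra δ hd_norm G g hgle m' hm1 hgm hδm hg0 s' idx k) ?_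
        exact mul_le_mul_of_nonneg_left (pow_le_pow_right₀ hm1 hs'le) hg0
      exact hgen _
    calc ‖Stmt17.qq t (j' : ℕ)‖ * ‖∑ s ∈ ((Finset.range ((j' : ℕ) + 1)).attach).erase ⟨0, hmem0 j'⟩,
        ((-1 : ℤ) ^ (s : ℕ) * ((j' : ℕ).choose s : ℤ)) •
          ((Stmt17.Nop d G)^[(s : ℕ)] (Stmt17.unitv
            (⟨(j' : ℕ) - (s : ℕ), by
              have hs := Finset.mem_range.mp s.2; have hj := j'.isLt; omega⟩ : Fin n))) k‖
        ≤ T * (g * m' ^ (n - 2)) := mul_le_mul (hqT j') hR (norm_nonneg _) hT0.le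
      _ = T * g * m' ^ (n - 2) := by ring
  have hwT : ∀ (i : ℕ) (j : Fin n), ‖Stmt17.wrow t i j‖ ≤ T := by
    intro i j
    unfold Stmt17.wrow
    by_cases hij : i ≤ (j : ℕ)
    · rw [if_pos hij]
      exact hqT' _ (by have := j.isLt; omega)
    · rw [if_neg hij, norm_zero]; linarith
  have hE := Stmt17.Ebound d hd_add hd_mul h_ultra δ hd_norm G g hgle m' hm1 hgm hδm hn t ht
    hinv hg0 hg1.le T hT1 hwT chat hE0
  -- matrices
  set W : Matrix (Fin n) (Fin n) B := Matrix.of fun i j => Stmt17.wrow t (i : ℕ) j with hWdef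
  set K : Matrix (Fin n) (Fin n) B := Matrix.of fun i j => Stmt17.krow t (i : ℕ) j with hKdef
  set Hm : Matrix (Fin n) (Fin n) B :=
    Matrix.of fun i j => ((Stmt17.Nop d G)^[(i : ℕ)] chat) j with hHmdef
  have hKW : K * W = 1 := by
    ext i j
    rw [Matrix.mul_apply, Matrix.one_apply]
    exact Stmt17.KW hn t hinv i j
  have hKT : ∀ i k : Fin n, ‖K i k‖ ≤ T := by
    intro i k
    show ‖Stmt17.krow t (i : ℕ) k‖ ≤ T
    unfold Stmt17.krow
    by_cases hik : (i : ℕ) ≤ (k : ℕ)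
    · rw [if_pos hik]
      exact le_trans (Stmt17.zsmul_le h_ultra h_int _ _) (hqT' _ (by have := k.isLt; omega))
    · rw [if_neg hik, norm_zero]; linarith
  set β : ℝ := T * (T * g * m' ^ (2 * n - 3)) with hβdef
  have hβ0 : 0 ≤ β := by positivity
  have hβ1 : β < 1 := by
    calc β = (g * T ^ 2) * m' ^ (2 * n - 3) := by rw [hβdef]; ring
      _ < μ * m' ^ (2 * n - 3) := mul_lt_mul_of_pos_right hgμ (pow_pos hm'0 _)
      _ ≤ 1 := hμm'
  have hXentry : ∀ i j, ‖(K * Hm - 1) i j‖ ≤ β := by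
    intro i j
    have h2 : (K * Hm - 1) i j = ∑ k, K i k * (Hm k j - W k j) := by
      have h3 : (1 : Matrix (Fin n) (Fin n) B) i j = ∑ k, K i k * W k j := by
        rw [← Matrix.mul_apply, hKW]
      rw [Matrix.sub_apply, Matrix.mul_apply, h3, ← Finset.sum_sub_distrib]
      exact Finset.sum_congr rfl fun k _ => (mul_sub _ _ _).symm
    rw [h2]
    refine Stmt17.usum h_ultra _ _ hβ0 ?_
    intro k _
    refine le_trans (norm_mul_le _ _) ?_
    have hHW : ‖Hm k j - W k j‖ ≤ T * g * m' ^ (2 * n - 3) := by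
      refine le_trans (hE (k : ℕ) j) ?_
      exact mul_le_mul_of_nonneg_left (pow_le_pow_right₀ hm1 (by have := k.isLt; omega))
        (by positivity)
    exact mul_le_mul (hKT i k) hHW (norm_nonneg _) hT0.le
  have hdet1 : ‖(K * Hm).det - 1‖ ≤ β := by
    have hXd := Stmt17.det_one_add h_ultra h_int hβ0 hβ1.le (K * Hm - 1) hXentry
    rw [show (1 : Matrix (Fin n) (Fin n) B) + (K * Hm - 1) = K * Hm by abel] at hXd
    exact hXd
  have hdetKHm : IsUnit ((K * Hm).det) := by
    have hlt : ‖1 - (K * Hm).det‖ < 1 := by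
      rw [norm_sub_rev]
      exact lt_of_le_of_lt hdet1 hβ1
    have h := (Units.oneSub _ hlt).isUnit
    simpa [Units.oneSub] using h
  have hdetHm : IsUnit (Hm.det) := by
    rw [Matrix.det_mul] at hdetKHm
    exact isUnit_of_mul_isUnit_right hdetKHm
  have hAU : IsUnit (Hm.transpose) := by
    rw [Matrix.isUnit_iff_isUnit_det, Matrix.det_transpose]
    exact hdetHm
  have hfU : IsUnit (Matrix.toLin e e Hm.transpose) := hAU.map (Matrix.toLinAlgEquiv e)
  have hbij := (Module.End.isUnit_iff _).mp hfU
  refine ⟨e.map (LinearEquiv.ofBijective (Matrix.toLin e e Hm.transpose) hbij), ?_⟩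
  intro i
  rw [Module.Basis.map_apply, LinearEquiv.ofBijective_apply, Matrix.toLin_self]
  have hfin : (∑ j, Hm.transpose j i • e j) = nab^[(i : ℕ)] c0 := by
    have h1 : ∀ j : Fin n, Hm.transpose j i = ((Stmt17.Nop d G)^[(i : ℕ)] chat) j := fun j => rfl
    rw [Finset.sum_congr rfl fun j _ => by rw [h1 j]]
    rw [← hiter (i : ℕ) chat, hsum_c0]
  exact hfin
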